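/- Let G be a graph on n vertices belonging to a homogeneous coherent configuration {I = A_0, ..., A_d} (i.e., the adjacency matrix of G is a sum of some of the A_r for r ≥ 1), with G connected. Let M and N be nonzero positive semidefinite matrices with M ∘ A = 0 and N ∘ (J − I − A) = 0, where A is the adjacency matrix of G and ∘ denotes entrywise product. Then n ≥ (tr JM)(tr JN)/((tr M)(tr N)). -/

import Mathlib

open Matrix
open scoped ComplexOrder

namespace CoherentAux
open Polynomial

set_option linter.unusedVariables false
set_option maxHeartbeats 1000000

variable {n d : ℕ}

lemma psd_trace_nonneg {Y : Matrix (Fin n) (Fin n) ℂ} (hY : Y.PosSemidef) : 0 ≤ Y.trace := by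
  rw [Matrix.trace]
  refine Finset.sum_nonneg fun i _ => ?_
  have := hY.dotProduct_mulVec_nonneg (Pi.single i 1)
  simpa [dotProduct, Matrix.mulVec_single, Pi.single_apply, Finset.sum_ite_eq,
    Matrix.diag] using this

lemma psd_eq_conjTranspose_mul_self {X : Matrix (Fin n) (Fin n) ℂ} (hX : X.PosSemidef) :
    ∃ W : Matrix (Fin n) (Fin n) ℂ, X = Wᴴ * W := by
  open scoped MatrixOrder in
  obtain ⟨W, hW, -, h⟩ := CFC.exists_sqrt_of_isSelfAdjoint_of_quasispectrumRestricts
    hX.isHermitian (QuasispectrumRestricts.nnreal_of_nonneg hX.nonneg)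
  exact ⟨W, by rw [← h]; exact congrArg (· * W) hW.symm⟩

lemma psd_trace_mul_nonneg {X C : Matrix (Fin n) (Fin n) ℂ} (hX : X.PosSemidef)
    (hC : C.PosSemidef) : 0 ≤ Matrix.trace (X * C) := by
  obtain ⟨W, rfl⟩ := psd_eq_conjTranspose_mul_self hX
  rw [Matrix.mul_assoc, Matrix.trace_mul_comm]
  exact psd_trace_nonneg (hC.mul_mul_conjTranspose_same W)

lemma psd_trace_pos {X : Matrix (Fin n) (Fin n) ℂ} (hX : X.PosSemidef) (hnz : X ≠ 0) :
    ∃ t : ℝ, X.trace = (t : ℂ) ∧ 0 < t := by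
  obtain ⟨W, rfl⟩ := psd_eq_conjTranspose_mul_self hX
  refine ⟨∑ i, ∑ j, Complex.normSq (W j i), ?_, ?_⟩
  · rw [Matrix.trace]
    push_cast
    refine Finset.sum_congr rfl fun i _ => ?_
    simp only [Matrix.diag_apply, Matrix.mul_apply, Matrix.conjTranspose_apply]
    refine Finset.sum_congr rfl fun j _ => ?_
    rw [Complex.normSq_eq_conj_mul_self, Complex.star_def]
  · have hnn : ∀ i ∈ (Finset.univ : Finset (Fin n)), (0:ℝ) ≤ ∑ j, Complex.normSq (W j i) :=
      fun i _ => Finset.sum_nonneg fun j _ => Complex.normSq_nonneg _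
    rcases lt_or_eq_of_le (Finset.sum_nonneg hnn) with h | h
    · exact h
    · exfalso
      apply hnz
      have hW : W = 0 := by
        ext j i
        have h2 := (Finset.sum_eq_zero_iff_of_nonneg hnn).mp h.symm i (Finset.mem_univ i)
        have h3 := (Finset.sum_eq_zero_iff_of_nonneg
          (fun j _ => Complex.normSq_nonneg (W j i))).mp h2 j (Finset.mem_univ j)
        simpa using (Complex.normSq_eq_zero.mp h3)
      rw [hW]
      simp

/-- Conjugation by a unitary as an ℝ-algebra hom on complex matrices. -/
noncomputable def unitaryConj (U : Matrix (Fin n) (Fin n) ℂ)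
    (hU : U ∈ Matrix.unitaryGroup (Fin n) ℂ) :
    Matrix (Fin n) (Fin n) ℂ →ₐ[ℝ] Matrix (Fin n) (Fin n) ℂ where
  toFun X := U * X * star U
  map_one' := by
    show U * 1 * star U = 1
    rw [Matrix.mul_one, Matrix.mem_unitaryGroup_iff.mp hU]
  map_mul' X Y := by
    have h : star U * U = 1 := Matrix.mem_unitaryGroup_iff'.mp hU
    calc U * (X * Y) * star U = U * X * (star U * U) * Y * star U := by
          rw [h]; noncomm_ring
      _ = U * X * star U * (U * Y * star U) := by noncomm_ring
  map_zero' := by simp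
  map_add' X Y := by noncomm_ring
  commutes' r := by
    simp only [Algebra.algebraMap_eq_smul_one]
    rw [Matrix.mul_smul, Matrix.mul_one, Matrix.smul_mul, Matrix.mem_unitaryGroup_iff.mp hU]

lemma aeval_unitary_conj (U : Matrix (Fin n) (Fin n) ℂ)
    (hU : U ∈ Matrix.unitaryGroup (Fin n) ℂ) (g : Fin n → ℝ) (p : ℝ[X]) :
    aeval (U * (Matrix.diagonal (fun i => (g i : ℂ))) * star U) p
      = U * (Matrix.diagonal fun i => ((p.eval (g i) : ℝ) : ℂ)) * star U := by
  have h1 : U * (Matrix.diagonal (fun i => (g i : ℂ))) * star U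
      = unitaryConj U hU (Matrix.diagonal (fun i => (g i : ℂ))) := rfl
  rw [h1, aeval_algHom_apply]
  have h2 : Matrix.diagonal (fun i => (g i : ℂ))
      = Matrix.diagonalAlgHom ℝ (fun i => (g i : ℂ)) := rfl
  rw [h2, aeval_algHom_apply]
  have h3 : aeval (fun i => (g i : ℂ)) p = fun i => ((p.eval (g i) : ℝ) : ℂ) := by
    funext i
    have h4 := aeval_algHom_apply (Pi.evalAlgHom ℝ (fun _ : Fin n => ℂ) i)
      (fun i => (g i : ℂ)) p
    rw [show ((aeval fun i => ((g i):ℂ)) p) i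
        = (Pi.evalAlgHom ℝ (fun _ : Fin n => ℂ) i) ((aeval fun i => ((g i):ℂ)) p) from rfl,
      ← h4, Pi.evalAlgHom_apply]
    have h5 : ((g i : ℂ)) = algebraMap ℝ ℂ (g i) := rfl
    rw [h5, aeval_algebraMap_apply_eq_algebraMap_eval]
    rfl
  rw [h3]
  rfl

lemma span_mul_mem (A : Fin (d + 1) → Matrix (Fin n) (Fin n) ℂ)
    (hprod : ∀ r s, ∃ c : Fin (d + 1) → ℂ, A r * A s = ∑ t, c t • A t)
    {P Q : Matrix (Fin n) (Fin n) ℂ}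
    (hP : P ∈ Submodule.span ℂ (Set.range A)) (hQ : Q ∈ Submodule.span ℂ (Set.range A)) :
    P * Q ∈ Submodule.span ℂ (Set.range A) := by
  set V := Submodule.span ℂ (Set.range A) with hV
  have base : ∀ r s : Fin (d+1), A r * A s ∈ V := by
    intro r s
    obtain ⟨c, hc⟩ := hprod r s
    rw [hc]
    exact Submodule.sum_mem _ fun t _ =>
      Submodule.smul_mem _ _ (Submodule.subset_span ⟨t, rfl⟩)
  have hmul1 : ∀ r : Fin (d+1), ∀ Q ∈ V, A r * Q ∈ V := by
    intro r Q hQ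
    induction hQ using Submodule.span_induction with
    | mem x hx => obtain ⟨s, rfl⟩ := hx; exact base r s
    | zero => rw [Matrix.mul_zero]; exact Submodule.zero_mem _
    | add x y _ _ hx hy => rw [Matrix.mul_add]; exact Submodule.add_mem _ hx hy
    | smul a x _ hx => rw [Matrix.mul_smul]; exact Submodule.smul_mem _ _ hx
  induction hP using Submodule.span_induction with
  | mem x hx => obtain ⟨r, rfl⟩ := hx; exact hmul1 r Q hQ
  | zero => rw [Matrix.zero_mul]; exact Submodule.zero_mem _
  | add x y _ _ hx hy => rw [Matrix.add_mul]; exact Submodule.add_mem _ hx hy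
  | smul a x _ hx => rw [Matrix.smul_mul]; exact Submodule.smul_mem _ _ hx

lemma span_aeval_mem (A : Fin (d + 1) → Matrix (Fin n) (Fin n) ℂ)
    (hA0 : A 0 = 1)
    (hprod : ∀ r s, ∃ c : Fin (d + 1) → ℂ, A r * A s = ∑ t, c t • A t)
    {B : Matrix (Fin n) (Fin n) ℂ} (hB : B ∈ Submodule.span ℂ (Set.range A))
    (p : ℝ[X]) : aeval B p ∈ Submodule.span ℂ (Set.range A) := by
  set V := Submodule.span ℂ (Set.range A) with hV
  have hone : (1 : Matrix (Fin n) (Fin n) ℂ) ∈ V := hA0 ▸ Submodule.subset_span ⟨0, rfl⟩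
  have hsmulR : ∀ (a : ℝ), ∀ X ∈ V, a • X ∈ V := by
    intro a X hX
    rw [show a • X = (algebraMap ℝ ℂ a) • X from (algebraMap_smul ℂ a X).symm]
    exact Submodule.smul_mem _ _ hX
  induction p using Polynomial.induction_on with
  | C a =>
    rw [aeval_C, Algebra.algebraMap_eq_smul_one]
    exact hsmulR a _ hone
  | add p q hp hq => rw [map_add]; exact Submodule.add_mem _ hp hq
  | monomial k a ih =>
    have : (C a * X ^ (k + 1) : ℝ[X]) = C a * X ^ k * X := by ring
    rw [this, _root_.map_mul, aeval_X]
    exact span_mul_mem A hprod ih hB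

noncomputable def msum' {n d : ℕ} (A : Fin (d + 1) → Matrix (Fin n) (Fin n) ℂ)
    (X : Matrix (Fin n) (Fin n) ℂ) (r : Fin (d + 1)) : ℂ :=
  ∑ i, ∑ j, A r i j * X i j

noncomputable def tsum' {n d : ℕ} (A : Fin (d + 1) → Matrix (Fin n) (Fin n) ℂ)
    (r : Fin (d + 1)) : ℂ := ∑ i, ∑ j, A r i j

noncomputable def proj' {n d : ℕ} (A : Fin (d + 1) → Matrix (Fin n) (Fin n) ℂ)
    (X : Matrix (Fin n) (Fin n) ℂ) : Matrix (Fin n) (Fin n) ℂ :=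
  ∑ r, (msum' A X r / tsum' A r) • A r

section Config
variable (A : Fin (d + 1) → Matrix (Fin n) (Fin n) ℂ)

lemma entry_nonneg (h01 : ∀ r, ∀ i j, A r i j = 0 ∨ A r i j = 1) (r : Fin (d+1)) (i j : Fin n) :
    0 ≤ A r i j := by
  rcases h01 r i j with h | h <;> rw [h] <;> norm_num

lemma sum_entry_one (hsum : ∑ r, A r = Matrix.of fun _ _ => (1 : ℂ)) (i j : Fin n) :
    ∑ r, A r i j = 1 := by
  have := congr_fun (congr_fun hsum i) j
  simpa [Matrix.sum_apply] using this

lemma entry_disjoint (h01 : ∀ r, ∀ i j, A r i j = 0 ∨ A r i j = 1)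
    (hsum : ∑ r, A r = Matrix.of fun _ _ => (1 : ℂ)) {r s : Fin (d+1)} {i j : Fin n}
    (hr : A r i j = 1) (hrs : s ≠ r) : A s i j = 0 := by
  have h1 := sum_entry_one A hsum i j
  rw [← Finset.add_sum_erase _ _ (Finset.mem_univ r), hr] at h1
  have h2 : ∑ u ∈ Finset.univ.erase r, A u i j = 0 := by
    have h3 : (1:ℂ) + ∑ u ∈ Finset.univ.erase r, A u i j = 1 + 0 := by rw [add_zero]; exact h1
    exact add_left_cancel h3
  exact (Finset.sum_eq_zero_iff_of_nonneg
    (fun u _ => entry_nonneg A h01 u i j)).mp h2 s (Finset.mem_erase.mpr ⟨hrs, Finset.mem_univ s⟩)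

lemma prod_disjoint (h01 : ∀ r, ∀ i j, A r i j = 0 ∨ A r i j = 1)
    (hsum : ∑ r, A r = Matrix.of fun _ _ => (1 : ℂ)) {r s : Fin (d+1)} (hrs : r ≠ s) (i j : Fin n) :
    A r i j * A s i j = 0 := by
  rcases h01 r i j with h | h
  · rw [h, zero_mul]
  · rw [entry_disjoint A h01 hsum h (Ne.symm hrs), mul_zero]

lemma diag_zero (hA0 : A 0 = 1) (h01 : ∀ r, ∀ i j, A r i j = 0 ∨ A r i j = 1)
    (hsum : ∑ r, A r = Matrix.of fun _ _ => (1 : ℂ)) {r : Fin (d+1)} (hr : r ≠ 0) (i : Fin n) :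
    A r i i = 0 := by
  have h1 : A 0 i i = 1 := by rw [hA0]; simp
  exact entry_disjoint A h01 hsum h1 hr

lemma eq_of_entries (h01 : ∀ r, ∀ i j, A r i j = 0 ∨ A r i j = 1)
    (hsum : ∑ r, A r = Matrix.of fun _ _ => (1 : ℂ)) {r s : Fin (d+1)}
    (h : A r = A s) (hnz : A r ≠ 0) : r = s := by
  by_contra hrs
  apply hnz
  ext i j
  have := prod_disjoint A h01 hsum hrs i j
  rw [← h] at this
  rcases h01 r i j with h' | h'
  · simpa using h'
  · rw [h', mul_one] at this; exact absurd this one_ne_zero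

lemma A_eq_zero_of_tsum (h01 : ∀ r, ∀ i j, A r i j = 0 ∨ A r i j = 1) {r : Fin (d+1)}
    (h : tsum' A r = 0) : A r = 0 := by
  have h' : (∑ i, ∑ j, A r i j) = 0 := h
  ext i j
  have h1 : ∀ i ∈ (Finset.univ : Finset (Fin n)), (0:ℂ) ≤ ∑ j, A r i j := fun i _ =>
    Finset.sum_nonneg fun j _ => by rcases h01 r i j with h|h <;> rw [h] <;> norm_num
  have h2 := (Finset.sum_eq_zero_iff_of_nonneg h1).mp h' i (Finset.mem_univ i)
  have h3 := (Finset.sum_eq_zero_iff_of_nonneg fun j _ => by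
    rcases h01 r i j with h|h <;> rw [h] <;> norm_num).mp h2 j (Finset.mem_univ j)
  simpa using h3

lemma star_entry (h01 : ∀ r, ∀ i j, A r i j = 0 ∨ A r i j = 1) (r : Fin (d+1)) (i j : Fin n) :
    star (A r i j) = A r i j := by
  rcases h01 r i j with h | h <;> rw [h] <;> simp

lemma tsum_sigma (h01 : ∀ r, ∀ i j, A r i j = 0 ∨ A r i j = 1) {r s : Fin (d+1)}
    (h : (A r)ᵀ = A s) : tsum' A s = tsum' A r := by
  unfold tsum'
  refine Finset.sum_comm.trans ?_
  refine Finset.sum_congr rfl fun j _ => Finset.sum_congr rfl fun i _ => ?_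
  rw [← h]
  rfl

lemma proj_herm (hA0 : A 0 = 1) (h01 : ∀ r, ∀ i j, A r i j = 0 ∨ A r i j = 1)
    (hsum : ∑ r, A r = Matrix.of fun _ _ => (1 : ℂ))
    (htrans : ∀ r, ∃ s, (A r)ᵀ = A s)
    {X : Matrix (Fin n) (Fin n) ℂ} (hX : X.IsHermitian) : (proj' A X).IsHermitian := by
  choose σ hσ using htrans
  have hAconj : ∀ r, (A r)ᴴ = A (σ r) := by
    intro r
    rw [← hσ r]
    ext i j
    exact star_entry A h01 r j i
  have hmsum : ∀ r, star (msum' A X r) = msum' A X (σ r) := by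
    intro r
    unfold msum'
    rw [star_sum]
    have : ∀ i, star (∑ j, A r i j * X i j) = ∑ j, A r i j * X j i := by
      intro i
      rw [star_sum]
      refine Finset.sum_congr rfl fun j _ => ?_
      rw [star_mul', star_entry A h01, hX.apply]
    simp_rw [this]
    rw [Finset.sum_comm]
    refine Finset.sum_congr rfl fun i _ => Finset.sum_congr rfl fun j _ => ?_
    rw [← hσ r]
    rfl
  have htsum' : ∀ r, star (tsum' A r) = tsum' A (σ r) := by
    intro r
    rw [tsum_sigma A h01 (hσ r)]
    unfold tsum' at *
    rw [star_sum]
    refine Finset.sum_congr rfl fun i _ => ?_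
    rw [star_sum]
    exact Finset.sum_congr rfl fun j _ => star_entry A h01 r i j
  unfold Matrix.IsHermitian proj'
  rw [conjTranspose_sum]
  simp_rw [conjTranspose_smul, hAconj, star_div₀, hmsum, htsum']
  -- now : ∑ r, (msum' A X (σ r) / tsum' A (σ r)) • A (σ r) = ∑ r, (msum' A X r / tsum' A r) • A r
  set f : Fin (d+1) → Matrix (Fin n) (Fin n) ℂ := fun t => (msum' A X t / tsum' A t) • A t with hf
  show ∑ r, f (σ r) = ∑ r, f r
  have hfz : ∀ t, A t = 0 → f t = 0 := by intro t ht; rw [hf]; simp [ht]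
  set S0 : Finset (Fin (d+1)) := Finset.univ.filter (fun t => A t ≠ 0) with hS0
  have hmem : ∀ t, t ∈ S0 ↔ A t ≠ 0 := by intro t; simp [hS0]
  have hσmem : ∀ t, A t ≠ 0 → A (σ t) ≠ 0 := by
    intro t ht hc
    apply ht
    have := hσ t
    rw [hc] at this
    calc A t = ((A t)ᵀ)ᵀ := by rw [transpose_transpose]
      _ = 0 := by rw [this]; simp
  have hinj : Set.InjOn σ S0 := by
    intro r hr r' hr' h
    have h1 : A r = A r' := by
      have := hσ r
      rw [h, ← hσ r'] at this
      calc A r = ((A r)ᵀ)ᵀ := by rw [transpose_transpose]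
        _ = A r' := by rw [this, transpose_transpose]
    exact eq_of_entries A h01 hsum h1 ((hmem r).mp hr)
  have himg : S0.image σ = S0 := by
    apply Finset.eq_of_subset_of_card_le
    · intro t ht
      obtain ⟨r, hr, rfl⟩ := Finset.mem_image.mp ht
      exact (hmem _).mpr (hσmem r ((hmem r).mp hr))
    · rw [Finset.card_image_of_injOn hinj]
  calc ∑ r, f (σ r) = ∑ r ∈ S0, f (σ r) := by
        refine (Finset.sum_subset (Finset.subset_univ S0) ?_).symm
        intro t _ ht
        refine hfz _ ?_
        have h0 : A t = 0 := by
          by_contra hc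
          exact ht ((hmem t).mpr hc)
        have h2 := hσ t
        rw [h0] at h2
        rw [← h2]
        simp
    _ = ∑ t ∈ S0.image σ, f t := (Finset.sum_image (fun r hr r' hr' h => hinj hr hr' h)).symm
    _ = ∑ t ∈ S0, f t := by rw [himg]
    _ = ∑ r, f r := by
        refine Finset.sum_subset (Finset.subset_univ S0) ?_
        intro t _ ht
        refine hfz _ ?_
        by_contra hc
        exact ht ((hmem t).mpr hc)

lemma trace_mul_entries (Y Z : Matrix (Fin n) (Fin n) ℂ) :
    (Y * Z).trace = ∑ i, ∑ j, Y i j * Z j i := by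
  simp [Matrix.trace, Matrix.diag, Matrix.mul_apply]

lemma pair_eq (h01 : ∀ r, ∀ i j, A r i j = 0 ∨ A r i j = 1)
    (hsum : ∑ r, A r = Matrix.of fun _ _ => (1 : ℂ)) (r s : Fin (d+1)) :
    ∑ i, ∑ j, A r i j * A s i j = if r = s then tsum' A r else 0 := by
  by_cases h : r = s
  · subst h
    rw [if_pos rfl]
    unfold tsum'
    refine Finset.sum_congr rfl fun i _ => Finset.sum_congr rfl fun j _ => ?_
    rcases h01 r i j with h|h <;> rw [h] <;> norm_num
  · rw [if_neg h]
    refine Finset.sum_eq_zero fun i _ => Finset.sum_eq_zero fun j _ =>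
      prod_disjoint A h01 hsum h i j

lemma msum_total (X : Matrix (Fin n) (Fin n) ℂ)
    (hsum : ∑ r, A r = Matrix.of fun _ _ => (1 : ℂ)) :
    ∑ r, msum' A X r = ∑ i, ∑ j, X i j := by
  unfold msum'
  rw [Finset.sum_comm]
  refine Finset.sum_congr rfl fun i _ => ?_
  rw [Finset.sum_comm]
  refine Finset.sum_congr rfl fun j _ => ?_
  rw [← Finset.sum_mul, sum_entry_one A hsum, one_mul]

lemma msum_zero (X : Matrix (Fin n) (Fin n) ℂ) {r : Fin (d+1)} (h : A r = 0) :
    msum' A X r = 0 := by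
  unfold msum'
  refine Finset.sum_eq_zero fun i _ => Finset.sum_eq_zero fun j _ => ?_
  rw [h]
  simp

lemma proj_orth (h01 : ∀ r, ∀ i j, A r i j = 0 ∨ A r i j = 1)
    (hsum : ∑ r, A r = Matrix.of fun _ _ => (1 : ℂ))
    (htrans : ∀ r, ∃ s, (A r)ᵀ = A s)
    (X : Matrix (Fin n) (Fin n) ℂ) (t : Fin (d+1)) :
    ((proj' A X) * A t).trace = (X * A t).trace := by
  obtain ⟨s, hs⟩ := htrans t
  have hts : ∀ i j, A t j i = A s i j := by
    intro i j
    rw [← hs]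
    rfl
  rw [trace_mul_entries, trace_mul_entries]
  have hrhs : ∑ i, ∑ j, X i j * A t j i = msum' A X s := by
    unfold msum'
    refine Finset.sum_congr rfl fun i _ => Finset.sum_congr rfl fun j _ => ?_
    rw [hts, mul_comm]
  rw [hrhs]
  have e1 : ∀ i j, (proj' A X) i j * A t j i
      = ∑ r, (msum' A X r / tsum' A r) * (A r i j * A s i j) := by
    intro i j
    rw [hts]
    unfold proj'
    rw [Matrix.sum_apply, Finset.sum_mul]
    exact Finset.sum_congr rfl fun r _ => by rw [Matrix.smul_apply, smul_eq_mul, mul_assoc]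
  have hlhs : ∑ i, ∑ j, (proj' A X) i j * A t j i
      = ∑ r, (msum' A X r / tsum' A r) * (∑ i, ∑ j, A r i j * A s i j) := by
    simp_rw [e1, Finset.mul_sum]
    calc ∑ i, ∑ j, ∑ r, msum' A X r / tsum' A r * (A r i j * A s i j)
        = ∑ i, ∑ r, ∑ j, msum' A X r / tsum' A r * (A r i j * A s i j) :=
          Finset.sum_congr rfl (fun i _ => Finset.sum_comm)
      _ = ∑ r, ∑ i, ∑ j, msum' A X r / tsum' A r * (A r i j * A s i j) := Finset.sum_comm
  rw [hlhs]
  have e2 : ∀ r, msum' A X r / tsum' A r * (∑ i, ∑ j, A r i j * A s i j)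
      = if r = s then msum' A X r / tsum' A r * tsum' A r else 0 := by
    intro r
    rw [pair_eq A h01 hsum r s, mul_ite, mul_zero]
  simp_rw [e2]
  rw [Finset.sum_ite_eq' Finset.univ s (fun r => msum' A X r / tsum' A r * tsum' A r),
    if_pos (Finset.mem_univ s)]
  by_cases hz : tsum' A s = 0
  · rw [hz, mul_zero, msum_zero A X (A_eq_zero_of_tsum A h01 hz)]
  · field_simp

lemma row_const (hA0 : A 0 = 1) (h01 : ∀ r, ∀ i j, A r i j = 0 ∨ A r i j = 1)
    (hsum : ∑ r, A r = Matrix.of fun _ _ => (1 : ℂ))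
    (hprod : ∀ r s, ∃ c : Fin (d + 1) → ℂ, A r * A s = ∑ t, c t • A t)
    (r : Fin (d+1)) (i i' : Fin n) : ∑ j, A r i j = ∑ j, A r i' j := by
  choose c hc using hprod r
  have key : ∀ i0 : Fin n, ∑ j, A r i0 j = ∑ s, c s 0 := by
    intro i0
    have h1 : (A r * (Matrix.of (fun _ _ => (1:ℂ)) : Matrix (Fin n) (Fin n) ℂ)) i0 i0 = ∑ j, A r i0 j := by
      simp [Matrix.mul_apply]
    have h2 : A r * Matrix.of (fun _ _ => (1:ℂ)) = ∑ s, ∑ t, c s t • A t := by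
      rw [← hsum, Matrix.mul_sum]
      exact Finset.sum_congr rfl fun s _ => hc s
    have h3 : (∑ s, ∑ t, c s t • A t) i0 i0 = ∑ s, c s 0 := by
      rw [Matrix.sum_apply]
      refine Finset.sum_congr rfl fun s _ => ?_
      rw [Matrix.sum_apply]
      have h4 : ∀ t, (c s t • A t) i0 i0 = if t = 0 then c s 0 else 0 := by
        intro t
        by_cases ht : t = 0
        · subst ht
          rw [if_pos rfl, Matrix.smul_apply, hA0, smul_eq_mul]
          simp
        · rw [if_neg ht, Matrix.smul_apply, diag_zero A hA0 h01 hsum ht, smul_zero]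
      simp_rw [h4]
      rw [Finset.sum_ite_eq' Finset.univ (0 : Fin (d+1)) (fun _ => c s 0),
        if_pos (Finset.mem_univ _)]
    rw [← h1, h2, h3]
  rw [key i, key i']

lemma col_const (hA0 : A 0 = 1) (h01 : ∀ r, ∀ i j, A r i j = 0 ∨ A r i j = 1)
    (hsum : ∑ r, A r = Matrix.of fun _ _ => (1 : ℂ))
    (htrans : ∀ r, ∃ s, (A r)ᵀ = A s)
    (hprod : ∀ r s, ∃ c : Fin (d + 1) → ℂ, A r * A s = ∑ t, c t • A t)
    (r : Fin (d+1)) (j j' : Fin n) : ∑ i, A r i j = ∑ i, A r i j' := by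
  obtain ⟨s, hs⟩ := htrans r
  have h1 : ∀ j0, ∑ i, A r i j0 = ∑ i, A s j0 i := by
    intro j0
    refine Finset.sum_congr rfl fun i _ => ?_
    rw [← hs]
    rfl
  rw [h1, h1, row_const A hA0 h01 hsum hprod s j j']

lemma proj_rowsum (hA0 : A 0 = 1) (h01 : ∀ r, ∀ i j, A r i j = 0 ∨ A r i j = 1)
    (hsum : ∑ r, A r = Matrix.of fun _ _ => (1 : ℂ))
    (hprod : ∀ r s, ∃ c : Fin (d + 1) → ℂ, A r * A s = ∑ t, c t • A t)
    (X : Matrix (Fin n) (Fin n) ℂ) (i0 : Fin n) :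
    ∑ j, proj' A X i0 j = (∑ i, ∑ j, X i j) / n := by
  have hn : (n:ℂ) ≠ 0 := by
    have : 0 < n := i0.pos
    exact_mod_cast Nat.pos_iff_ne_zero.mp this
  have h1 : ∑ j, proj' A X i0 j = ∑ r, (msum' A X r / tsum' A r) * (∑ j, A r i0 j) := by
    unfold proj'
    simp_rw [Matrix.sum_apply, Matrix.smul_apply, smul_eq_mul, Finset.mul_sum]
    exact Finset.sum_comm
  rw [h1]
  have h2 : ∀ r, (msum' A X r / tsum' A r) * (∑ j, A r i0 j) = msum' A X r / n := by
    intro r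
    by_cases hz : tsum' A r = 0
    · have hz2 : A r = 0 := A_eq_zero_of_tsum A h01 hz
      have hm : msum' A X r = 0 := by
        unfold msum'
        refine Finset.sum_eq_zero fun i _ => Finset.sum_eq_zero fun j _ => ?_
        rw [hz2]; simp
      rw [hm]
      simp
    · have hw : tsum' A r = n * (∑ j, A r i0 j) := by
        unfold tsum'
        calc ∑ i, ∑ j, A r i j = ∑ _i : Fin n, ∑ j, A r i0 j :=
              Finset.sum_congr rfl fun i _ => row_const A hA0 h01 hsum hprod r i i0
          _ = n * (∑ j, A r i0 j) := by
              rw [Finset.sum_const, Finset.card_univ, Fintype.card_fin, nsmul_eq_mul]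
      have hw0 : (∑ j, A r i0 j) ≠ 0 := by
        intro h0
        apply hz
        rw [hw, h0, mul_zero]
      rw [hw]
      field_simp
  simp_rw [h2]
  rw [← Finset.sum_div, msum_total A X hsum]

lemma proj_colsum (hA0 : A 0 = 1) (h01 : ∀ r, ∀ i j, A r i j = 0 ∨ A r i j = 1)
    (hsum : ∑ r, A r = Matrix.of fun _ _ => (1 : ℂ))
    (htrans : ∀ r, ∃ s, (A r)ᵀ = A s)
    (hprod : ∀ r s, ∃ c : Fin (d + 1) → ℂ, A r * A s = ∑ t, c t • A t)
    (X : Matrix (Fin n) (Fin n) ℂ) (j0 : Fin n) :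
    ∑ i, proj' A X i j0 = (∑ i, ∑ j, X i j) / n := by
  have hn : (n:ℂ) ≠ 0 := by
    have : 0 < n := j0.pos
    exact_mod_cast Nat.pos_iff_ne_zero.mp this
  have h1 : ∑ i, proj' A X i j0 = ∑ r, (msum' A X r / tsum' A r) * (∑ i, A r i j0) := by
    unfold proj'
    simp_rw [Matrix.sum_apply, Matrix.smul_apply, smul_eq_mul, Finset.mul_sum]
    exact Finset.sum_comm
  rw [h1]
  have h2 : ∀ r, (msum' A X r / tsum' A r) * (∑ i, A r i j0) = msum' A X r / n := by
    intro r
    by_cases hz : tsum' A r = 0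
    · have hz2 : A r = 0 := A_eq_zero_of_tsum A h01 hz
      have hm : msum' A X r = 0 := by
        unfold msum'
        refine Finset.sum_eq_zero fun i _ => Finset.sum_eq_zero fun j _ => ?_
        rw [hz2]; simp
      rw [hm]
      simp
    · have hw : tsum' A r = n * (∑ i, A r i j0) := by
        unfold tsum'
        refine Finset.sum_comm.trans ?_
        calc ∑ j, ∑ i, A r i j = ∑ _j : Fin n, ∑ i, A r i j0 :=
              Finset.sum_congr rfl fun j _ => col_const A hA0 h01 hsum htrans hprod r j j0
          _ = n * (∑ i, A r i j0) := by
              rw [Finset.sum_const, Finset.card_univ, Fintype.card_fin, nsmul_eq_mul]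
      have hw0 : (∑ i, A r i j0) ≠ 0 := by
        intro h0
        apply hz
        rw [hw, h0, mul_zero]
      rw [hw]
      field_simp
  simp_rw [h2]
  rw [← Finset.sum_div, msum_total A X hsum]

lemma proj_psd (hA0 : A 0 = 1) (h01 : ∀ r, ∀ i j, A r i j = 0 ∨ A r i j = 1)
    (hsum : ∑ r, A r = Matrix.of fun _ _ => (1 : ℂ))
    (htrans : ∀ r, ∃ s, (A r)ᵀ = A s)
    (hprod : ∀ r s, ∃ c : Fin (d + 1) → ℂ, A r * A s = ∑ t, c t • A t)
    {X : Matrix (Fin n) (Fin n) ℂ} (hX : X.PosSemidef) : (proj' A X).PosSemidef := by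
  classical
  have hherm : (proj' A X).IsHermitian := proj_herm A hA0 h01 hsum htrans hX.1
  refine hherm.posSemidef_iff_eigenvalues_nonneg.mpr ?_
  intro k
  show (0:ℝ) ≤ hherm.eigenvalues k
  by_contra hneg
  push_neg at hneg
  set B := proj' A X with hBdef
  set lam : Fin n → ℝ := hherm.eigenvalues with hlam
  set T : Finset ℝ := (Finset.univ.image lam).filter (fun x => 0 ≤ x) with hT
  set q : ℝ[X] := ∏ μ ∈ T, (Polynomial.X - Polynomial.C μ) with hq
  set p : ℝ[X] := -(Polynomial.X * q ^ 2) with hp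
  have hpeval : ∀ x : ℝ, p.eval x = -(x * (∏ μ ∈ T, (x - μ))^2) := by
    intro x
    simp [hp, hq, Polynomial.eval_prod]
  have hnonneg_eval : ∀ i, 0 ≤ p.eval (lam i) := by
    intro i
    rcases le_or_gt 0 (lam i) with h|h
    · have hmem : lam i ∈ T := by
        rw [hT]
        exact Finset.mem_filter.mpr ⟨Finset.mem_image_of_mem lam (Finset.mem_univ i), h⟩
      rw [hpeval, Finset.prod_eq_zero hmem (by ring)]
      simp
    · rw [hpeval]
      nlinarith [sq_nonneg (∏ μ ∈ T, (lam i - μ))]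
  have hterm_nonpos : ∀ i, lam i * p.eval (lam i) ≤ 0 := by
    intro i
    rw [hpeval]
    have : lam i * -(lam i * (∏ μ ∈ T, (lam i - μ))^2)
        = -((lam i * ∏ μ ∈ T, (lam i - μ))^2) := by ring
    rw [this]
    exact neg_nonpos.mpr (sq_nonneg _)
  have hk_neg : lam k * p.eval (lam k) < 0 := by
    rw [hpeval]
    have hs : (∏ μ ∈ T, (lam k - μ)) ≠ 0 := by
      refine Finset.prod_ne_zero_iff.mpr fun μ hμ => ?_
      have hμ0 : 0 ≤ μ := (Finset.mem_filter.mp hμ).2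
      have : lam k < μ := lt_of_lt_of_le hneg hμ0
      linarith
    have hk0 : lam k ≠ 0 := ne_of_lt hneg
    have : lam k * -(lam k * (∏ μ ∈ T, (lam k - μ))^2)
        = -((lam k * ∏ μ ∈ T, (lam k - μ))^2) := by ring
    rw [this]
    have : (lam k * ∏ μ ∈ T, (lam k - μ)) ≠ 0 := mul_ne_zero hk0 hs
    have hpos : 0 < (lam k * ∏ μ ∈ T, (lam k - μ))^2 := by positivity
    linarith
  set U : Matrix (Fin n) (Fin n) ℂ := (hherm.eigenvectorUnitary : Matrix (Fin n) (Fin n) ℂ)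
    with hUdef
  have hU : U ∈ Matrix.unitaryGroup (Fin n) ℂ := hherm.eigenvectorUnitary.2
  have hBspec : B = U * (Matrix.diagonal (fun i => ((lam i : ℝ) : ℂ))) * star U := by
    have := hherm.spectral_theorem
    rw [this, Unitary.conjStarAlgAut_apply]
    rfl
  set Cm : Matrix (Fin n) (Fin n) ℂ := aeval B p with hCm
  have hCform : Cm = U * (Matrix.diagonal fun i => ((p.eval (lam i) : ℝ) : ℂ)) * star U := by
    rw [hCm, hBspec, aeval_unitary_conj U hU lam p]
  have hCpsd : Cm.PosSemidef := by
    rw [hCform]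
    have h1 : (Matrix.diagonal fun i => ((p.eval (lam i) : ℝ) : ℂ)).PosSemidef :=
      Matrix.posSemidef_diagonal_iff.mpr fun i => by
        rw [Complex.zero_le_real]
        exact hnonneg_eval i
    have h2 := h1.mul_mul_conjTranspose_same U
    convert h2 using 2
    rfl
  have hstarU : star U * U = 1 := Matrix.mem_unitaryGroup_iff'.mp hU
  have htrBC : (B * Cm).trace = ((∑ i, lam i * p.eval (lam i) : ℝ) : ℂ) := by
    rw [hCform, hBspec]
    have hmul : U * (Matrix.diagonal (fun i => ((lam i : ℝ) : ℂ))) * star U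
        * (U * (Matrix.diagonal fun i => ((p.eval (lam i) : ℝ) : ℂ)) * star U)
        = U * ((Matrix.diagonal (fun i => ((lam i : ℝ) : ℂ)))
            * (Matrix.diagonal fun i => ((p.eval (lam i) : ℝ) : ℂ))) * star U := by
      calc U * (Matrix.diagonal (fun i => ((lam i : ℝ) : ℂ))) * star U
          * (U * (Matrix.diagonal fun i => ((p.eval (lam i) : ℝ) : ℂ)) * star U)
          = U * (Matrix.diagonal (fun i => ((lam i : ℝ) : ℂ))) * (star U * U)
            * (Matrix.diagonal fun i => ((p.eval (lam i) : ℝ) : ℂ)) * star U := by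
            noncomm_ring
        _ = _ := by rw [hstarU]; noncomm_ring
    rw [hmul]
    have htr : ∀ D : Matrix (Fin n) (Fin n) ℂ, (U * D * star U).trace = D.trace := by
      intro D
      rw [Matrix.trace_mul_comm, ← Matrix.mul_assoc, hstarU, Matrix.one_mul]
    rw [htr, Matrix.diagonal_mul_diagonal, Matrix.trace_diagonal]
    push_cast
    ring
  have htrneg : ∑ i, lam i * p.eval (lam i) < 0 := by
    have h0 : (0:ℝ) = ∑ _i : Fin n, (0:ℝ) := by simp
    rw [h0]
    refine Finset.sum_lt_sum (fun i _ => hterm_nonpos i) ⟨k, Finset.mem_univ k, hk_neg⟩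
  have hBmem : B ∈ Submodule.span ℂ (Set.range A) := by
    rw [hBdef]
    unfold proj'
    exact Submodule.sum_mem _ fun r _ => Submodule.smul_mem _ _ (Submodule.subset_span ⟨r, rfl⟩)
  have hCmem : Cm ∈ Submodule.span ℂ (Set.range A) := span_aeval_mem A hA0 hprod hBmem p
  have horth : ∀ C' ∈ Submodule.span ℂ (Set.range A), (B * C').trace = (X * C').trace := by
    intro C' hC'
    induction hC' using Submodule.span_induction with
    | mem x hx => obtain ⟨t, rfl⟩ := hx; exact proj_orth A h01 hsum htrans X t
    | zero => simp
    | add x y _ _ hx hy => rw [Matrix.mul_add, Matrix.mul_add, trace_add, trace_add, hx, hy]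
    | smul a x _ hx => rw [Matrix.mul_smul, Matrix.mul_smul, trace_smul, trace_smul, hx]
  have hge : 0 ≤ (B * Cm).trace := by
    rw [horth Cm hCmem]
    exact psd_trace_mul_nonneg hX hCpsd
  rw [htrBC, Complex.zero_le_real] at hge
  linarith

end Config
end CoherentAux

/-- Theorem for graphs in homogeneous coherent configurations (condition (A)):
if G is connected, its adjacency matrix A is a sum of non-identity classes of a
homogeneous coherent configuration, and M, N are nonzero PSD matrices with
M ∘ A = 0 and N ∘ (J - I - A) = 0, then n ≥ (tr JM)(tr JN)/((tr M)(tr N)). -/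
theorem coherent_config_ratio_bound {n d : ℕ}
    (G : SimpleGraph (Fin n)) [DecidableRel G.Adj]
    (hconn : G.Connected)
    (A : Fin (d + 1) → Matrix (Fin n) (Fin n) ℂ)
    (hA0 : A 0 = 1)
    (h01 : ∀ r, ∀ i j, A r i j = 0 ∨ A r i j = 1)
    (hsum : ∑ r, A r = Matrix.of fun _ _ => (1 : ℂ))
    (hdiag : ∀ r, (∀ i j : Fin n, i ≠ j → A r i j = 0) ∨ (∀ i : Fin n, A r i i = 0))
    (htrans : ∀ r, ∃ s, (A r)ᵀ = A s)
    (hprod : ∀ r s, ∃ c : Fin (d + 1) → ℂ, A r * A s = ∑ t, c t • A t)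
    (R : Finset (Fin (d + 1))) (hR : (0 : Fin (d + 1)) ∉ R)
    (hadj : G.adjMatrix ℂ = ∑ r ∈ R, A r)
    (M N : Matrix (Fin n) (Fin n) ℂ)
    (hM : M.PosSemidef) (hN : N.PosSemidef)
    (hMnz : M ≠ 0) (hNnz : N ≠ 0)
    (hMA : Matrix.hadamard M (G.adjMatrix ℂ) = 0)
    (hNA : Matrix.hadamard N ((Matrix.of fun _ _ => (1 : ℂ)) - 1 - G.adjMatrix ℂ) = 0) :
    Matrix.trace ((Matrix.of fun _ _ => (1 : ℂ)) * M) *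
        Matrix.trace ((Matrix.of fun _ _ => (1 : ℂ)) * N) /
      (Matrix.trace M * Matrix.trace N) ≤ (n : ℂ) := by
  classical
  obtain ⟨v⟩ := hconn.nonempty
  have hnpos : 0 < n := v.pos
  have hn : (n:ℂ) ≠ 0 := Nat.cast_ne_zero.mpr (Nat.pos_iff_ne_zero.mp hnpos)
  set Jm : Matrix (Fin n) (Fin n) ℂ := Matrix.of fun _ _ => (1 : ℂ) with hJm
  have hJmapp : ∀ i j, Jm i j = 1 := fun i j => rfl
  -- total sums
  set SM : ℂ := ∑ i, ∑ j, M i j with hSM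
  set SN : ℂ := ∑ i, ∑ j, N i j with hSN
  -- SM, SN are nonneg reals
  have hSMpos : 0 ≤ SM := by
    have h := hM.dotProduct_mulVec_nonneg (fun _ => (1:ℂ))
    have he : dotProduct (star (fun _ => (1:ℂ))) (M *ᵥ (fun _ => (1:ℂ))) = SM := by
      simp [dotProduct, Matrix.mulVec, hSM]
    rwa [he] at h
  have hSNpos : 0 ≤ SN := by
    have h := hN.dotProduct_mulVec_nonneg (fun _ => (1:ℂ))
    have he : dotProduct (star (fun _ => (1:ℂ))) (N *ᵥ (fun _ => (1:ℂ))) = SN := by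
      simp [dotProduct, Matrix.mulVec, hSN]
    rwa [he] at h
  set sm : ℝ := SM.re with hsm
  set sn : ℝ := SN.re with hsn
  have hSMre : SM = (sm:ℂ) := Complex.eq_re_of_ofReal_le (by exact_mod_cast hSMpos)
  have hSNre : SN = (sn:ℂ) := Complex.eq_re_of_ofReal_le (by exact_mod_cast hSNpos)
  have hsm0 : 0 ≤ sm := by
    have := hSMpos; rw [hSMre] at this; exact_mod_cast this
  have hsn0 : 0 ≤ sn := by
    have := hSNpos; rw [hSNre] at this; exact_mod_cast this
  obtain ⟨tm, htm, htmpos⟩ := CoherentAux.psd_trace_pos hM hMnz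
  obtain ⟨tn, htn, htnpos⟩ := CoherentAux.psd_trace_pos hN hNnz
  -- the projections
  set P : Matrix (Fin n) (Fin n) ℂ := CoherentAux.proj' A M with hP
  set Q0 : Matrix (Fin n) (Fin n) ℂ := CoherentAux.proj' A N with hQ0
  set Q : Matrix (Fin n) (Fin n) ℂ := Q0ᵀ with hQ
  have hPpsd : P.PosSemidef := CoherentAux.proj_psd A hA0 h01 hsum htrans hprod hM
  have hQpsd : Q.PosSemidef := (CoherentAux.proj_psd A hA0 h01 hsum htrans hprod hN).transpose
  have hProw : ∀ i0, ∑ j, P i0 j = SM / n := fun i0 => CoherentAux.proj_rowsum A hA0 h01 hsum hprod M i0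
  have hPcol : ∀ j0, ∑ i, P i j0 = SM / n := fun j0 => CoherentAux.proj_colsum A hA0 h01 hsum htrans hprod M j0
  have hQrow : ∀ i0, ∑ j, Q i0 j = SN / n := fun i0 => CoherentAux.proj_colsum A hA0 h01 hsum htrans hprod N i0
  have hQcol : ∀ j0, ∑ i, Q i j0 = SN / n := fun j0 => CoherentAux.proj_rowsum A hA0 h01 hsum hprod N j0
  -- J multiplication identities
  have hJP : Jm * P = (SM / n) • Jm := by
    ext i j
    simp only [Matrix.mul_apply, hJmapp, one_mul, Matrix.smul_apply, smul_eq_mul, mul_one]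
    exact hPcol j
  have hPJ : P * Jm = (SM / n) • Jm := by
    ext i j
    simp only [Matrix.mul_apply, hJmapp, mul_one, Matrix.smul_apply, smul_eq_mul]
    exact hProw i
  have hJQ : Jm * Q = (SN / n) • Jm := by
    ext i j
    simp only [Matrix.mul_apply, hJmapp, one_mul, Matrix.smul_apply, smul_eq_mul, mul_one]
    exact hQcol j
  have hQJ : Q * Jm = (SN / n) • Jm := by
    ext i j
    simp only [Matrix.mul_apply, hJmapp, mul_one, Matrix.smul_apply, smul_eq_mul]
    exact hQrow i
  have hJJ : Jm * Jm = (n:ℂ) • Jm := by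
    ext i j
    simp [Matrix.mul_apply, hJmapp]
  -- K projection
  set K : Matrix (Fin n) (Fin n) ℂ := 1 - ((n:ℂ))⁻¹ • Jm with hK
  have hKherm : Kᴴ = K := by
    rw [hK, Matrix.conjTranspose_sub, Matrix.conjTranspose_smul, Matrix.conjTranspose_one]
    congr 1
    · rw [star_inv₀, star_natCast]
      congr 1
      ext i j
      simp [Matrix.conjTranspose_apply, hJmapp]
  -- P' and Q'
  have hKP : K * P * K = P - (SM / ((n:ℂ)*(n:ℂ))) • Jm := by
    have h1 : K * P = P - (SM / ((n:ℂ)*(n:ℂ))) • Jm := by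
      rw [hK, Matrix.sub_mul, Matrix.one_mul, Matrix.smul_mul, hJP, smul_smul]
      congr 2
      field_simp
    rw [h1, hK, Matrix.mul_sub, Matrix.mul_one, Matrix.mul_smul, Matrix.sub_mul,
      Matrix.smul_mul, hPJ, hJJ, smul_smul]
    have hz0 : SM / (n:ℂ) - SM / ((n:ℂ)*(n:ℂ)) * (n:ℂ) = 0 := by field_simp; ring
    rw [← sub_smul, hz0, zero_smul, smul_zero, sub_zero]
  have hKQ : K * Q * K = Q - (SN / ((n:ℂ)*(n:ℂ))) • Jm := by
    have h1 : K * Q = Q - (SN / ((n:ℂ)*(n:ℂ))) • Jm := by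
      rw [hK, Matrix.sub_mul, Matrix.one_mul, Matrix.smul_mul, hJQ, smul_smul]
      congr 2
      field_simp
    rw [h1, hK, Matrix.mul_sub, Matrix.mul_one, Matrix.mul_smul, Matrix.sub_mul,
      Matrix.smul_mul, hQJ, hJJ, smul_smul]
    have hz0 : SN / (n:ℂ) - SN / ((n:ℂ)*(n:ℂ)) * (n:ℂ) = 0 := by field_simp; ring
    rw [← sub_smul, hz0, zero_smul, smul_zero, sub_zero]
  have hP'psd : (P - (SM / ((n:ℂ)*(n:ℂ))) • Jm).PosSemidef := by
    rw [← hKP]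
    have h := hPpsd.conjTranspose_mul_mul_same K
    rwa [hKherm] at h
  have hQ'psd : (Q - (SN / ((n:ℂ)*(n:ℂ))) • Jm).PosSemidef := by
    rw [← hKQ]
    have h := hQpsd.conjTranspose_mul_mul_same K
    rwa [hKherm] at h
  have htrge : 0 ≤ ((P - (SM / ((n:ℂ)*(n:ℂ))) • Jm) * (Q - (SN / ((n:ℂ)*(n:ℂ))) • Jm)).trace :=
    CoherentAux.psd_trace_mul_nonneg hP'psd hQ'psd
  have htrJm : Jm.trace = (n:ℂ) := by
    simp [Matrix.trace, Matrix.diag, hJmapp]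
  -- expansion of the product trace
  have hexp : ((P - (SM / ((n:ℂ)*(n:ℂ))) • Jm) * (Q - (SN / ((n:ℂ)*(n:ℂ))) • Jm)).trace
      = (P * Q).trace - SM * SN / ((n:ℂ)*(n:ℂ)) := by
    rw [Matrix.sub_mul, Matrix.mul_sub, Matrix.mul_sub, Matrix.trace_sub, Matrix.trace_sub,
      Matrix.trace_sub, Matrix.mul_smul, Matrix.smul_mul, Matrix.smul_mul, Matrix.mul_smul,
      hPJ, hJQ, hJJ]
    simp only [Matrix.trace_smul, smul_eq_mul, htrJm]
    field_simp
    ring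
  -- trace (P * Q) via class orthogonality
  have hPapp : ∀ i j, P i j = ∑ r, (CoherentAux.msum' A M r / CoherentAux.tsum' A r) * A r i j := by
    intro i j
    rw [hP]
    unfold CoherentAux.proj'
    rw [Matrix.sum_apply]
    exact Finset.sum_congr rfl fun r _ => by rw [Matrix.smul_apply, smul_eq_mul]
  have hQ0app : ∀ i j, Q0 i j = ∑ s, (CoherentAux.msum' A N s / CoherentAux.tsum' A s) * A s i j := by
    intro i j
    rw [hQ0]
    unfold CoherentAux.proj'
    rw [Matrix.sum_apply]
    exact Finset.sum_congr rfl fun r _ => by rw [Matrix.smul_apply, smul_eq_mul]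
  -- support lemmas
  have hsupM : ∀ r ∈ R, CoherentAux.msum' A M r = 0 := by
    intro r hr
    refine Finset.sum_eq_zero fun i _ => Finset.sum_eq_zero fun j _ => ?_
    rcases h01 r i j with h|h
    · rw [h, zero_mul]
    · have hadj1 : G.adjMatrix ℂ i j = 1 := by
        rw [hadj, Matrix.sum_apply, ← Finset.add_sum_erase _ _ hr, h]
        have hz : ∑ r' ∈ R.erase r, A r' i j = 0 :=
          Finset.sum_eq_zero fun r' hr' =>
            CoherentAux.entry_disjoint A h01 hsum h (Finset.mem_erase.mp hr').1
        rw [hz, add_zero]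
      have hm0 : M i j = 0 := by
        have hc := congr_fun (congr_fun hMA i) j
        rw [Matrix.hadamard_apply, hadj1, mul_one] at hc
        exact hc
      rw [hm0, mul_zero]
  have hsupN : ∀ r, r ∉ R → r ≠ 0 → CoherentAux.msum' A N r = 0 := by
    intro r hrR hr0
    refine Finset.sum_eq_zero fun i _ => Finset.sum_eq_zero fun j _ => ?_
    rcases h01 r i j with h|h
    · rw [h, zero_mul]
    · have hij : i ≠ j := by
        intro hij
        subst hij
        rw [CoherentAux.diag_zero A hA0 h01 hsum hr0 i] at h
        exact zero_ne_one h
      have hcomp1 : (Jm - 1 - G.adjMatrix ℂ) i j = 1 := by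
        have hadj0 : G.adjMatrix ℂ i j = 0 := by
          rw [hadj, Matrix.sum_apply]
          refine Finset.sum_eq_zero fun r' hr' => CoherentAux.entry_disjoint A h01 hsum h ?_
          intro hc
          rw [hc] at hr'
          exact hrR hr'
        have hone : (1 : Matrix (Fin n) (Fin n) ℂ) i j = 0 := Matrix.one_apply_ne hij
        simp only [Matrix.sub_apply, hJmapp, hone, hadj0]
        ring
      have hn0 : N i j = 0 := by
        have hc := congr_fun (congr_fun hNA i) j
        rw [Matrix.hadamard_apply, hcomp1, mul_one] at hc
        exact hc
      rw [hn0, mul_zero]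
  have hmsumM0 : CoherentAux.msum' A M 0 = M.trace := by
    show (∑ i, ∑ j, A 0 i j * M i j) = M.trace
    rw [Matrix.trace]
    refine Finset.sum_congr rfl fun i _ => ?_
    have he : ∀ j, A 0 i j * M i j = if i = j then M i j else 0 := by
      intro j
      rw [hA0, Matrix.one_apply]
      split <;> simp
    simp_rw [he]
    rw [Finset.sum_ite_eq Finset.univ i (fun j => M i j), if_pos (Finset.mem_univ i)]
    rfl
  have hmsumN0 : CoherentAux.msum' A N 0 = N.trace := by
    show (∑ i, ∑ j, A 0 i j * N i j) = N.trace
    rw [Matrix.trace]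
    refine Finset.sum_congr rfl fun i _ => ?_
    have he : ∀ j, A 0 i j * N i j = if i = j then N i j else 0 := by
      intro j
      rw [hA0, Matrix.one_apply]
      split <;> simp
    simp_rw [he]
    rw [Finset.sum_ite_eq Finset.univ i (fun j => N i j), if_pos (Finset.mem_univ i)]
    rfl
  have htsum0 : CoherentAux.tsum' A 0 = (n:ℂ) := by
    show (∑ i, ∑ j : Fin n, A 0 i j) = (n:ℂ)
    have he : ∀ i, ∑ j, A 0 i j = 1 := by
      intro i
      have : ∀ j, A 0 i j = if i = j then 1 else 0 := by
        intro j
        rw [hA0, Matrix.one_apply]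
      simp_rw [this]
      rw [Finset.sum_ite_eq Finset.univ i (fun _ => (1:ℂ)), if_pos (Finset.mem_univ i)]
    simp_rw [he]
    simp
  have htrPQ : (P * Q).trace = M.trace * N.trace / n := by
    rw [hQ, CoherentAux.trace_mul_entries]
    have e0 : ∀ i j, P i j * Q0ᵀ j i = P i j * Q0 i j := fun i j => rfl
    simp_rw [e0]
    have e1 : ∀ i j, P i j * Q0 i j
        = ∑ r, ∑ s, (CoherentAux.msum' A M r / CoherentAux.tsum' A r) * (CoherentAux.msum' A N s / CoherentAux.tsum' A s)
            * (A r i j * A s i j) := by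
      intro i j
      rw [hPapp, hQ0app, Finset.sum_mul_sum]
      exact Finset.sum_congr rfl fun r _ => Finset.sum_congr rfl fun s _ => by ring
    simp_rw [e1]
    have swap1 : ∑ i, ∑ j, ∑ r, ∑ s, (CoherentAux.msum' A M r / CoherentAux.tsum' A r) * (CoherentAux.msum' A N s / CoherentAux.tsum' A s)
            * (A r i j * A s i j)
        = ∑ r, ∑ s, ∑ i, ∑ j, (CoherentAux.msum' A M r / CoherentAux.tsum' A r) * (CoherentAux.msum' A N s / CoherentAux.tsum' A s)
            * (A r i j * A s i j) := by
      calc ∑ i, ∑ j, ∑ r, ∑ s, (CoherentAux.msum' A M r / CoherentAux.tsum' A r) * (CoherentAux.msum' A N s / CoherentAux.tsum' A s)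
            * (A r i j * A s i j)
          = ∑ i, ∑ r, ∑ j, ∑ s, (CoherentAux.msum' A M r / CoherentAux.tsum' A r) * (CoherentAux.msum' A N s / CoherentAux.tsum' A s)
            * (A r i j * A s i j) := Finset.sum_congr rfl fun i _ => Finset.sum_comm
        _ = ∑ r, ∑ i, ∑ j, ∑ s, (CoherentAux.msum' A M r / CoherentAux.tsum' A r) * (CoherentAux.msum' A N s / CoherentAux.tsum' A s)
            * (A r i j * A s i j) := Finset.sum_comm
        _ = ∑ r, ∑ i, ∑ s, ∑ j, (CoherentAux.msum' A M r / CoherentAux.tsum' A r) * (CoherentAux.msum' A N s / CoherentAux.tsum' A s)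
            * (A r i j * A s i j) := Finset.sum_congr rfl fun r _ =>
              Finset.sum_congr rfl fun i _ => Finset.sum_comm
        _ = ∑ r, ∑ s, ∑ i, ∑ j, (CoherentAux.msum' A M r / CoherentAux.tsum' A r) * (CoherentAux.msum' A N s / CoherentAux.tsum' A s)
            * (A r i j * A s i j) := Finset.sum_congr rfl fun r _ => Finset.sum_comm
    rw [swap1]
    have e2 : ∀ r s, ∑ i, ∑ j, (CoherentAux.msum' A M r / CoherentAux.tsum' A r) * (CoherentAux.msum' A N s / CoherentAux.tsum' A s)
            * (A r i j * A s i j)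
        = (CoherentAux.msum' A M r / CoherentAux.tsum' A r) * (CoherentAux.msum' A N s / CoherentAux.tsum' A s)
            * (∑ i, ∑ j, A r i j * A s i j) := by
      intro r s
      rw [Finset.mul_sum]
      exact Finset.sum_congr rfl fun i _ => by rw [Finset.mul_sum]
    simp_rw [e2, CoherentAux.pair_eq A h01 hsum, mul_ite, mul_zero]
    have e3 : ∀ r, (∑ s, if r = s then (CoherentAux.msum' A M r / CoherentAux.tsum' A r) * (CoherentAux.msum' A N s / CoherentAux.tsum' A s)
            * CoherentAux.tsum' A r else 0)
        = (CoherentAux.msum' A M r / CoherentAux.tsum' A r) * (CoherentAux.msum' A N r / CoherentAux.tsum' A r) * CoherentAux.tsum' A r := by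
      intro r
      rw [Finset.sum_ite_eq Finset.univ r
        (fun s => (CoherentAux.msum' A M r / CoherentAux.tsum' A r) * (CoherentAux.msum' A N s / CoherentAux.tsum' A s) * CoherentAux.tsum' A r),
        if_pos (Finset.mem_univ r)]
    simp_rw [e3]
    have e4 : ∀ r, (CoherentAux.msum' A M r / CoherentAux.tsum' A r) * (CoherentAux.msum' A N r / CoherentAux.tsum' A r) * CoherentAux.tsum' A r
        = if r = 0 then M.trace * N.trace / n else 0 := by
      intro r
      by_cases hr0 : r = 0
      · subst hr0
        rw [if_pos rfl, hmsumM0, hmsumN0, htsum0]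
        field_simp
      · rw [if_neg hr0]
        by_cases hrR : r ∈ R
        · rw [hsupM r hrR]
          simp
        · rw [hsupN r hrR hr0]
          simp
    simp_rw [e4]
    rw [Finset.sum_ite_eq' Finset.univ (0 : Fin (d+1)) (fun _ => M.trace * N.trace / n),
      if_pos (Finset.mem_univ _)]
  -- main inequality, real form
  rw [hexp, htrPQ] at htrge
  rw [htm, htn, hSMre, hSNre] at htrge
  have hreal : (0:ℝ) ≤ tm * tn / n - sm * sn / ((n:ℝ)*(n:ℝ)) := by
    have h := htrge
    rw [show ((tm:ℂ) * tn / n - (sm:ℂ) * sn / ((n:ℂ)*(n:ℂ)))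
        = ((tm * tn / n - sm * sn / ((n:ℝ)*(n:ℝ)) : ℝ) : ℂ) by push_cast; ring] at h
    exact_mod_cast h
  -- rewrite the goal
  have htrJM : ((Jm : Matrix (Fin n) (Fin n) ℂ) * M).trace = SM := by
    rw [CoherentAux.trace_mul_entries]
    simp_rw [hJmapp, one_mul]
    rw [hSM]
    exact Finset.sum_comm
  have htrJN : ((Jm : Matrix (Fin n) (Fin n) ℂ) * N).trace = SN := by
    rw [CoherentAux.trace_mul_entries]
    simp_rw [hJmapp, one_mul]
    rw [hSN]
    exact Finset.sum_comm
  rw [show Matrix.trace ((Matrix.of fun _ _ => (1 : ℂ)) * M) = SM from htrJM,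
    show Matrix.trace ((Matrix.of fun _ _ => (1 : ℂ)) * N) = SN from htrJN,
    hSMre, hSNre, htm, htn]
  have hnr : (0:ℝ) < (n:ℝ) := by exact_mod_cast hnpos
  have hfinal : sm * sn / (tm * tn) ≤ (n:ℝ) := by
    rw [div_le_iff₀ (by positivity)]
    have h5 : sm * sn / ((n:ℝ)*(n:ℝ)) * ((n:ℝ)*(n:ℝ)) ≤ tm * tn / (n:ℝ) * ((n:ℝ)*(n:ℝ)) :=
      mul_le_mul_of_nonneg_right (by linarith) (by positivity)
    rw [div_mul_cancel₀ _ (by positivity : ((n:ℝ)*(n:ℝ)) ≠ 0)] at h5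
    have h6 : tm * tn / (n:ℝ) * ((n:ℝ)*(n:ℝ)) = (n:ℝ) * (tm * tn) := by
      field_simp
    linarith [h6 ▸ h5]
  calc (sm:ℂ) * sn / ((tm:ℂ) * tn) = ((sm * sn / (tm * tn) : ℝ) : ℂ) := by push_cast; ring
    _ ≤ (((n:ℝ)) : ℂ) := by rw [Complex.real_le_real]; exact hfinal
    _ = ((n:ℕ) : ℂ) := by push_cast; ring
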